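/- Fix κ > 0. For λ > 0 let g_λ(p) := (2πλ²)^{−1/2} e^{−p²/(2λ²)} (the square of the modulus of the Fourier transform of the normalized Gaussian ψ_λ(s) = (2λ²/π)^{1/4} e^{−λ² s²}). Then ∫_ℝ κ (p² + κ²)^{−1/2} g_λ(p) dp − 1 = −λ²/(2κ²) + O(λ³) as λ → 0+; that is, lim_{λ→0+} λ^{−2} ( ∫_ℝ κ (p² + κ²)^{−1/2} g_λ(p) dp − 1 ) = −1/(2κ²). -/

import Mathlib

open MeasureTheory Real Filter

lemma integrable_sq_gauss' : Integrable (fun x : ℝ => x ^ 2 * Real.exp (-(1/2) * x ^ 2)) := by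
  have h := integrable_rpow_mul_exp_neg_mul_sq (b := 1/2) (by norm_num) (s := 2) (by norm_num)
  have : ∀ x : ℝ, x ^ (2:ℝ) = x ^ 2 := fun x => by
    rw [show (2:ℝ) = ((2:ℕ):ℝ) by norm_num, Real.rpow_natCast]
  simpa [this] using h

lemma integral_sq_gauss' : ∫ x : ℝ, x ^ 2 * Real.exp (-(1/2) * x ^ 2) = Real.sqrt (2 * π) := by
  have hint1 : Integrable (fun x : ℝ => Real.exp (-(1/2) * x ^ 2)) :=
    integrable_exp_neg_mul_sq (by norm_num)
  have hint' : Integrable (fun x : ℝ => (x ^ 2 - 1) * Real.exp (-(1/2) * x ^ 2)) := by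
    simpa [sub_mul, Pi.sub_def] using integrable_sq_gauss'.sub hint1
  have hderiv : ∀ x : ℝ, HasDerivAt (fun x : ℝ => -x * Real.exp (-(1/2) * x ^ 2))
      ((x ^ 2 - 1) * Real.exp (-(1/2) * x ^ 2)) x := by
    intro x
    have h1 : HasDerivAt (fun x : ℝ => -(1/2) * x ^ 2) (-(1/2) * (2 * x ^ 1)) x :=
      (hasDerivAt_pow 2 x).const_mul _
    have h2 := h1.exp
    have h3 : HasDerivAt (fun x : ℝ => -x * Real.exp (-(1/2) * x ^ 2))
        (-1 * Real.exp (-(1/2) * x ^ 2) + -x * (Real.exp (-(1/2) * x ^ 2) * (-(1/2) * (2 * x ^ 1)))) x :=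
      ((hasDerivAt_id x).neg).mul h2
    convert h3 using 1
    ring
  -- tendsto at top
  have htop : Tendsto (fun x : ℝ => -x * Real.exp (-(1/2) * x ^ 2)) atTop (nhds 0) := by
    have hlin : Tendsto (fun x : ℝ => -(1/2) * x) atTop atBot :=
      tendsto_id.const_mul_atTop_of_neg (by norm_num : (-(1/2):ℝ) < 0)
    have h := (rpow_mul_exp_neg_mul_sq_isLittleO_exp_neg (b := 1/2) (by norm_num) 1).tendsto_zero_of_tendsto
      (Real.tendsto_exp_atBot.comp hlin)
    have h' : Tendsto (fun x : ℝ => x * Real.exp (-(1/2) * x ^ 2)) atTop (nhds 0) := by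
      apply h.congr' ?_
      filter_upwards [eventually_ge_atTop (0:ℝ)] with x hx
      rw [Real.rpow_one]
    simpa using h'.neg
  have hbot : Tendsto (fun x : ℝ => -x * Real.exp (-(1/2) * x ^ 2)) atBot (nhds 0) := by
    have h2 := (htop.comp tendsto_neg_atBot_atTop).neg
    rw [neg_zero] at h2
    apply h2.congr
    intro x
    simp [Function.comp, neg_sq]
  have key := integral_of_hasDerivAt_of_tendsto hderiv hint' hbot htop
  have key2 : ∫ x : ℝ, ((x ^ 2 - 1) * Real.exp (-(1/2) * x ^ 2)) = 0 := by
    simpa using key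
  have hsplit : ∫ x : ℝ, ((x ^ 2 - 1) * Real.exp (-(1/2) * x ^ 2))
      = (∫ x : ℝ, x ^ 2 * Real.exp (-(1/2) * x ^ 2)) - ∫ x : ℝ, Real.exp (-(1/2) * x ^ 2) := by
    rw [← integral_sub integrable_sq_gauss' hint1]
    congr 1; ext x; ring
  have hg : ∫ x : ℝ, Real.exp (-(1/2) * x ^ 2) = Real.sqrt (2 * π) := by
    rw [integral_gaussian, show (π/(1/2):ℝ) = 2*π by ring]
  rw [hsplit, hg] at key2
  linarith

noncomputable def Gfun (κ lam u : ℝ) : ℝ :=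
  -(u^2) / (Real.sqrt (lam^2*u^2 + κ^2) * (κ + Real.sqrt (lam^2*u^2 + κ^2)))
    * ((2*π)^(-(1/2):ℝ) * Real.exp (-u^2/2))

lemma hexpform (u : ℝ) : Real.exp (-u^2/2) = Real.exp (-(1/2) * u^2) := by ring_nf

lemma hrpow_sqrt (a : ℝ) (ha : 0 ≤ a) : a ^ (-(1/2):ℝ) = (Real.sqrt a)⁻¹ := by
  rw [Real.rpow_neg ha, Real.sqrt_eq_rpow]

lemma sqrt_ge (κ : ℝ) (hκ : 0 < κ) (x : ℝ) : κ ≤ Real.sqrt (x^2 + κ^2) := by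
  rw [show x^2 + κ^2 = κ^2 + x^2 by ring]
  calc κ = Real.sqrt (κ^2) := (Real.sqrt_sq hκ.le).symm
  _ ≤ _ := Real.sqrt_le_sqrt (by nlinarith)

/-- **Gaussian asymptotics of the straight-line quadratic form.** Fix `κ > 0` and let
`g_λ(p) = (2πλ²)^{−1/2} e^{−p²/(2λ²)}` be the Gaussian probability density (the squared
modulus of the Fourier transform of `ψ_λ(s) = (2λ²/π)^{1/4} e^{−λ²s²}`). Then
`∫ κ(p²+κ²)^{−1/2} g_λ(p) dp − 1 = −λ²/(2κ²) + O(λ³)` as `λ → 0+`, i.e.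
`λ^{−2}(∫ κ(p²+κ²)^{−1/2} g_λ(p) dp − 1) → −1/(2κ²)`. -/
theorem gaussian_form_asymptotics (κ : ℝ) (hκ : 0 < κ) :
    Filter.Tendsto
      (fun lam : ℝ =>
        ((∫ p : ℝ, κ * (p ^ 2 + κ ^ 2) ^ (-(1 / 2) : ℝ)
            * ((2 * π * lam ^ 2) ^ (-(1 / 2) : ℝ) * Real.exp (-p ^ 2 / (2 * lam ^ 2)))) - 1)
          / lam ^ 2)
      (nhdsWithin 0 (Set.Ioi (0 : ℝ))) (nhds (-1 / (2 * κ ^ 2))) := by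
  have hc1 : ((2*π:ℝ)) ^ (-(1/2):ℝ) * Real.sqrt (2*π) = 1 := by
    rw [Real.rpow_neg (by positivity), Real.sqrt_eq_rpow]
    exact inv_mul_cancel₀ (by positivity)
  have hEint : Integrable (fun u : ℝ => Real.exp (-u^2/2)) := by
    have := integrable_exp_neg_mul_sq (show (0:ℝ) < 1/2 by norm_num)
    simpa [hexpform] using this
  -- continuity of sqrt part
  have hsqcont : ∀ lam : ℝ, Continuous (fun u : ℝ => Real.sqrt (lam^2*u^2 + κ^2)) := by
    intro lam
    exact (Real.continuous_sqrt.comp ((continuous_const.mul (continuous_pow 2)).add continuous_const))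
  have htpos : ∀ lam u : ℝ, 0 < Real.sqrt (lam^2*u^2 + κ^2) := by
    intro lam u
    exact Real.sqrt_pos.mpr (by positivity)
  have htge : ∀ lam u : ℝ, κ ≤ Real.sqrt (lam^2*u^2 + κ^2) := by
    intro lam u
    have := sqrt_ge κ hκ (lam*u)
    rwa [mul_pow] at this
  -- Step 1 : for lam > 0 the function equals ∫ Gfun κ lam
  have heq : ∀ lam : ℝ, lam ∈ Set.Ioi (0:ℝ) →
      ((∫ p : ℝ, κ * (p ^ 2 + κ ^ 2) ^ (-(1 / 2) : ℝ)
            * ((2 * π * lam ^ 2) ^ (-(1 / 2) : ℝ) * Real.exp (-p ^ 2 / (2 * lam ^ 2)))) - 1)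
          / lam ^ 2 = ∫ u : ℝ, Gfun κ lam u := by
    intro lam hl
    rw [Set.mem_Ioi] at hl
    have hl2 : (lam:ℝ)^2 ≠ 0 := by positivity
    have hrw : ∀ u : ℝ, ((lam^2*u^2 + κ^2:ℝ)) ^ (-(1/2):ℝ) = (Real.sqrt (lam^2*u^2 + κ^2))⁻¹ :=
      fun u => hrpow_sqrt _ (by positivity)
    have hscale : ((2*π*lam^2:ℝ)) ^ (-(1/2):ℝ) = (2*π) ^ (-(1/2):ℝ) * lam⁻¹ := by
      rw [Real.mul_rpow (by positivity) (by positivity)]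
      congr 1
      rw [← Real.rpow_natCast lam 2, ← Real.rpow_mul hl.le]
      norm_num [Real.rpow_neg_one]
    -- substitution p = lam * u
    set T : ℝ → ℝ := fun p => κ * (p ^ 2 + κ ^ 2) ^ (-(1 / 2) : ℝ)
            * ((2 * π * lam ^ 2) ^ (-(1 / 2) : ℝ) * Real.exp (-p ^ 2 / (2 * lam ^ 2))) with hT
    have hA : ∀ u : ℝ, T (lam * u) = lam⁻¹ *
        ((κ * (lam^2*u^2 + κ^2) ^ (-(1/2):ℝ)) * ((2*π) ^ (-(1/2):ℝ) * Real.exp (-u^2/2))) := by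
      intro u
      have hexp : -(lam*u)^2/(2*lam^2) = -u^2/2 := by
        field_simp
      rw [hT]
      simp only
      rw [hexp, hscale, mul_pow]
      ring
    have h1 := MeasureTheory.Measure.integral_comp_mul_left T lam
    rw [abs_of_pos (inv_pos.mpr hl), smul_eq_mul] at h1
    simp_rw [hA] at h1
    rw [integral_const_mul] at h1
    have h2 : (∫ p : ℝ, T p)
        = ∫ u : ℝ, (κ * (lam^2*u^2 + κ^2) ^ (-(1/2):ℝ)) * ((2*π) ^ (-(1/2):ℝ) * Real.exp (-u^2/2)) :=
      (mul_left_cancel₀ (inv_ne_zero hl.ne') h1.symm)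
    -- the normalized gaussian integrates to 1
    have hφ1 : ∫ u : ℝ, (2*π) ^ (-(1/2):ℝ) * Real.exp (-u^2/2) = 1 := by
      rw [integral_const_mul]
      have : ∫ u : ℝ, Real.exp (-u^2/2) = Real.sqrt (2*π) := by
        simp_rw [hexpform]
        rw [integral_gaussian, show (π/(1/2):ℝ) = 2*π by ring]
      rw [this, hc1]
    -- integrability of the transformed integrand
    have hφint : Integrable (fun u : ℝ => (2*π) ^ (-(1/2):ℝ) * Real.exp (-u^2/2)) :=
      hEint.const_mul _
    have hFle : ∀ u : ℝ, ‖(κ * (lam^2*u^2 + κ^2) ^ (-(1/2):ℝ)) * ((2*π) ^ (-(1/2):ℝ) * Real.exp (-u^2/2))‖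
        ≤ (2*π) ^ (-(1/2):ℝ) * Real.exp (-u^2/2) := by
      intro u
      rw [hrw u, Real.norm_eq_abs, abs_mul]
      have ht := htpos lam u
      have htg := htge lam u
      have h01 : |κ * (Real.sqrt (lam^2*u^2+κ^2))⁻¹| ≤ 1 := by
        rw [abs_of_nonneg (by positivity)]
        rw [mul_inv_le_iff₀ ht, one_mul]
        exact htg
      calc |κ * (Real.sqrt (lam^2*u^2+κ^2))⁻¹| * |(2*π) ^ (-(1/2):ℝ) * Real.exp (-u^2/2)|
          ≤ 1 * |(2*π) ^ (-(1/2):ℝ) * Real.exp (-u^2/2)| := by gcongr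
        _ = (2*π) ^ (-(1/2):ℝ) * Real.exp (-u^2/2) := by
            rw [one_mul, abs_of_nonneg (by positivity)]
    have hAmeas : AEStronglyMeasurable
        (fun u : ℝ => (κ * (lam^2*u^2 + κ^2) ^ (-(1/2):ℝ)) * ((2*π) ^ (-(1/2):ℝ) * Real.exp (-u^2/2))) volume := by
      apply Continuous.aestronglyMeasurable
      apply Continuous.mul
      · simp_rw [hrw]
        exact continuous_const.mul ((hsqcont lam).inv₀ (fun u => (htpos lam u).ne'))
      · exact continuous_const.mul (Real.continuous_exp.comp ((continuous_pow 2).neg.div_const 2))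
    have hAint : Integrable
        (fun u : ℝ => (κ * (lam^2*u^2 + κ^2) ^ (-(1/2):ℝ)) * ((2*π) ^ (-(1/2):ℝ) * Real.exp (-u^2/2))) :=
      hφint.mono' hAmeas (Filter.Eventually.of_forall hFle)
    -- pointwise identity
    have hiden : ∀ u : ℝ,
        (κ * (lam^2*u^2 + κ^2) ^ (-(1/2):ℝ)) * ((2*π) ^ (-(1/2):ℝ) * Real.exp (-u^2/2))
          - (2*π) ^ (-(1/2):ℝ) * Real.exp (-u^2/2) = lam^2 * Gfun κ lam u := by
      intro u
      rw [Gfun, hrw u]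
      set t := Real.sqrt (lam^2*u^2+κ^2) with htdef
      have ht2 : t^2 = lam^2*u^2+κ^2 := Real.sq_sqrt (by positivity)
      have ht := htpos lam u
      have hκt : 0 < κ + t := by linarith [htge lam u]
      rw [← htdef] at *
      have key : κ * t⁻¹ - 1 = lam^2 * (-(u^2) / (t * (κ + t))) := by
        field_simp
        nlinarith [ht2]
      calc (κ * t⁻¹) * ((2*π) ^ (-(1/2):ℝ) * Real.exp (-u^2/2))
            - (2*π) ^ (-(1/2):ℝ) * Real.exp (-u^2/2)
          = (κ * t⁻¹ - 1) * ((2*π) ^ (-(1/2):ℝ) * Real.exp (-u^2/2)) := by ring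
        _ = lam^2 * (-(u^2) / (t * (κ + t)) * ((2*π) ^ (-(1/2):ℝ) * Real.exp (-u^2/2))) := by
            rw [key]; ring
    have h3 : (∫ p : ℝ, T p) - 1 = lam^2 * ∫ u : ℝ, Gfun κ lam u := by
      have h4 : (∫ u : ℝ, (κ * (lam^2*u^2 + κ^2) ^ (-(1/2):ℝ)) * ((2*π) ^ (-(1/2):ℝ) * Real.exp (-u^2/2)))
          - (∫ u : ℝ, (2*π) ^ (-(1/2):ℝ) * Real.exp (-u^2/2)) = lam^2 * ∫ u : ℝ, Gfun κ lam u := by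
        rw [← integral_sub hAint hφint]
        simp_rw [hiden]
        exact integral_const_mul _ _
      rw [h2, ← h4, hφ1]
    rw [h3]
    field_simp
  -- Step 2 : dominated convergence
  have hGcont : ∀ lam : ℝ, Continuous (fun u => Gfun κ lam u) := by
    intro lam
    unfold Gfun
    apply Continuous.mul
    · apply Continuous.div
      · exact (continuous_pow 2).neg
      · exact (hsqcont lam).mul (continuous_const.add (hsqcont lam))
      · intro u
        exact (mul_pos (htpos lam u) (by linarith [htge lam u])).ne'
    · exact continuous_const.mul (Real.continuous_exp.comp ((continuous_pow 2).neg.div_const 2))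
  have hbound : ∀ lam : ℝ, ∀ u : ℝ, ‖Gfun κ lam u‖ ≤
      u^2 / (2*κ^2) * ((2*π) ^ (-(1/2):ℝ) * Real.exp (-u^2/2)) := by
    intro lam u
    unfold Gfun
    have ht := htpos lam u
    have htg := htge lam u
    have hden : 0 < Real.sqrt (lam^2*u^2+κ^2) * (κ + Real.sqrt (lam^2*u^2+κ^2)) := by
      apply mul_pos ht; linarith
    rw [Real.norm_eq_abs, abs_mul, abs_of_nonneg (show (0:ℝ) ≤ (2*π) ^ (-(1/2):ℝ) * Real.exp (-u^2/2) by positivity),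
      abs_div, abs_neg, abs_of_nonneg (sq_nonneg u), abs_of_pos hden]
    have h2κ : 2*κ^2 ≤ Real.sqrt (lam^2*u^2+κ^2) * (κ + Real.sqrt (lam^2*u^2+κ^2)) := by
      nlinarith
    exact mul_le_mul_of_nonneg_right
      (div_le_div_of_nonneg_left (sq_nonneg u) (by positivity) h2κ) (by positivity)
  have hbint : Integrable (fun u : ℝ => u^2 / (2*κ^2) * ((2*π) ^ (-(1/2):ℝ) * Real.exp (-u^2/2))) := by
    have h := integrable_sq_gauss'.const_mul ((2*π) ^ (-(1/2):ℝ) / (2*κ^2))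
    apply h.congr
    apply Filter.Eventually.of_forall
    intro u
    simp only [hexpform]
    ring
  have hlim : ∀ u : ℝ, Tendsto (fun lam => Gfun κ lam u) (nhdsWithin 0 (Set.Ioi (0:ℝ)))
      (nhds (Gfun κ 0 u)) := by
    intro u
    have hca : ContinuousAt (fun lam => Gfun κ lam u) 0 := by
      unfold Gfun
      apply ContinuousAt.mul
      · apply ContinuousAt.div
        · exact continuousAt_const
        · apply Continuous.continuousAt
          have : Continuous fun lam : ℝ => Real.sqrt (lam^2*u^2+κ^2) :=
            Real.continuous_sqrt.comp (((continuous_pow 2).mul continuous_const).add continuous_const)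
          exact this.mul (continuous_const.add this)
        · have h0 : Real.sqrt ((0:ℝ)^2*u^2+κ^2) = κ := by
            rw [show (0:ℝ)^2*u^2+κ^2 = κ^2 by ring, Real.sqrt_sq hκ.le]
          simp only [h0]
          positivity
      · exact continuousAt_const
    exact hca.tendsto.mono_left nhdsWithin_le_nhds
  have hG0 : ∫ u : ℝ, Gfun κ 0 u = -1 / (2*κ^2) := by
    have h0 : ∀ u : ℝ, Gfun κ 0 u =
        (-1 / (2*κ^2) * (2*π) ^ (-(1/2):ℝ)) * (u^2 * Real.exp (-(1/2)*u^2)) := by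
      intro u
      unfold Gfun
      rw [show (0:ℝ)^2*u^2+κ^2 = κ^2 by ring, Real.sqrt_sq hκ.le, hexpform]
      field_simp
      ring
    simp_rw [h0]
    rw [integral_const_mul, integral_sq_gauss']
    rw [mul_assoc, hc1, mul_one]
  have hmain : Tendsto (fun lam : ℝ => ∫ u : ℝ, Gfun κ lam u)
      (nhdsWithin 0 (Set.Ioi (0:ℝ))) (nhds (-1 / (2*κ^2))) := by
    rw [← hG0]
    apply tendsto_integral_filter_of_dominated_convergence
      (fun u : ℝ => u^2 / (2*κ^2) * ((2*π) ^ (-(1/2):ℝ) * Real.exp (-u^2/2)))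
    · exact Filter.Eventually.of_forall (fun lam => (hGcont lam).aestronglyMeasurable)
    · exact Filter.Eventually.of_forall
        (fun lam => Filter.Eventually.of_forall (fun u => hbound lam u))
    · exact hbint
    · exact Filter.Eventually.of_forall (fun u => hlim u)
  exact hmain.congr' (Filter.eventuallyEq_of_mem self_mem_nhdsWithin
    (fun lam hl => (heq lam hl).symm))
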